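/- Let G be a commutative cancellative semigroup of cardinality κ, and let θ ≤ κ be a cardinal. If Pℓ(κ,θ) holds, then G ↛ [κ]^{FS₂}_θ holds; that is, there exists a colouring c : G → θ such that for every X ⊆ G of cardinality κ and every δ < θ, there are two distinct elements x, y ∈ X with c(x + y) = δ. -/

import Mathlib

open Cardinal

/-- `[κ]^{<χ}`: the collection of sets of ordinals below `κ` of cardinality `< χ`. -/
def OSet (κ χ : Cardinal.{0}) : Type 1 :=
  {x : Set Ordinal.{0} // x ⊆ Set.Iio κ.ord ∧ Cardinal.mk x < Cardinal.lift.{1} χ}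

/-- The principle `Pℓ(κ,θ)`. -/
def Pl (κ θ : Cardinal.{0}) : Prop :=
  ∃ d : OSet κ ℵ₀ → θ.ord.ToType,
    ∀ 𝒳 : Set (OSet κ ℵ₀), Cardinal.mk 𝒳 = Cardinal.lift.{1} κ →
      ∀ δ : θ.ord.ToType,
        ∃ x ∈ 𝒳, ∃ y ∈ 𝒳, x ≠ y ∧
          ∀ z : OSet κ ℵ₀, symmDiff x.1 y.1 ⊆ z.1 → z.1 ⊆ x.1 ∪ y.1 → d z = δ

namespace Stmt13

def osF (κ : Cardinal.{0}) (s : Finset Ordinal.{0}) (hs : ∀ o ∈ s, o < κ.ord) : OSet κ ℵ₀ :=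
  ⟨(s : Set Ordinal.{0}), by
    constructor
    · intro o ho
      exact hs o (by simpa using ho)
    · calc Cardinal.mk (s : Set Ordinal.{0}) < ℵ₀ := s.finite_toSet.lt_aleph0
        _ ≤ Cardinal.lift.{1,0} ℵ₀ := by simp⟩

@[simp] lemma osF_coe (κ : Cardinal.{0}) (s : Finset Ordinal.{0}) (hs : ∀ o ∈ s, o < κ.ord) :
    (osF κ s hs).1 = (s : Set Ordinal.{0}) := rfl

lemma osF_inj {κ : Cardinal.{0}} {s t : Finset Ordinal.{0}} {hs ht} :
    osF κ s hs = osF κ t ht → s = t := by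
  intro h
  have : (s : Set Ordinal.{0}) = t := congrArg Subtype.val h
  exact_mod_cast Finset.coe_injective this

lemma colors_mk (θ : Cardinal.{0}) : Cardinal.mk θ.ord.ToType = θ :=
  Cardinal.mk_ord_toType θ


def osE (κ : Cardinal.{0}) : OSet κ ℵ₀ := osF κ ∅ (by simp)

/-- If `θ = 0` then `Pl κ θ` fails. -/
lemma not_Pl_zero (κ : Cardinal.{0}) : ¬ Pl κ 0 := by
  rintro ⟨d, -⟩
  have : Nonempty (Cardinal.ord 0).ToType := ⟨d (osE κ)⟩
  rw [Ordinal.toType_nonempty_iff_ne_zero] at this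
  simp at this

/-- If `κ = 1 = θ` then `Pl κ θ` fails. -/
lemma not_Pl_one : ¬ Pl 1 1 := by
  rintro ⟨d, hd⟩
  have h1 : Nonempty (Cardinal.ord 1).ToType := by
    rw [Ordinal.toType_nonempty_iff_ne_zero]
    simp
  obtain ⟨δ⟩ := h1
  obtain ⟨x, hx, y, hy, hxy, -⟩ := hd {osE 1} (by simp) δ
  simp only [Set.mem_singleton_iff] at hx hy
  exact hxy (hx.trans hy.symm)

/-- ### the `κ = ℵ₀` refutation -/
lemma not_Pl_aleph0 {θ : Cardinal.{0}} (hθ : 2 ≤ θ) : ¬ Pl Cardinal.aleph0.{0} θ := by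
  rintro ⟨d, hd⟩
  have h2 : (2:Cardinal) ≤ Cardinal.mk θ.ord.ToType := by rw [colors_mk]; exact hθ
  obtain ⟨δ₀, δ₁, hne⟩ := Cardinal.two_le_iff.mp h2
  have hord : Cardinal.ord ℵ₀ = Ordinal.omega0 := Cardinal.ord_aleph0
  by_cases hA : ∃ δ, ∃ s₀ : Finset Ordinal.{0}, (∀ o ∈ s₀, o < Cardinal.ord ℵ₀) ∧
      ∀ (t : Finset Ordinal.{0}) (ht : ∀ o ∈ t, o < Cardinal.ord ℵ₀),
        s₀ ⊆ t → d (osF ℵ₀ t ht) = δ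
  · -- saturated case
    obtain ⟨δ, s₀, hs₀v, hsat⟩ := hA
    set δ' : θ.ord.ToType := if δ = δ₀ then δ₁ else δ₀ with hδ'def
    have hδ' : δ' ≠ δ := by
      rcases eq_or_ne δ δ₀ with hc | hc
      · rw [hδ'def, if_pos hc, hc]; exact hne.symm
      · rw [hδ'def, if_neg hc]; exact hc.symm
    -- tags
    set K : Set ℕ := {k : ℕ | (k : Ordinal.{0}) ∉ s₀} with hK
    have hKinf : K.Infinite := by
      have hfin : {k : ℕ | (k : Ordinal.{0}) ∈ s₀}.Finite := by
        apply Set.Finite.preimage _ s₀.finite_toSet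
        intro a _ b _ hab
        exact_mod_cast hab
      simpa [hK, Set.compl_setOf] using hfin.infinite_compl
    haveI := hKinf.to_subtype
    have hvalid : ∀ (k : ℕ), ∀ o ∈ insert (k : Ordinal.{0}) s₀, o < Cardinal.ord ℵ₀ := by
      intro k o ho
      rcases Finset.mem_insert.mp ho with h | h
      · rw [h, hord]; exact Ordinal.nat_lt_omega0 k
      · exact hs₀v o h
    set f : K → OSet ℵ₀ ℵ₀ := fun k => osF ℵ₀ (insert ((k : ℕ) : Ordinal.{0}) s₀) (hvalid (k : ℕ)) with hf
    have hfinj : Function.Injective f := by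
      intro a b hab
      have h1 := osF_inj hab
      have : (a : ℕ) = (b : ℕ) := by
        have ha : ((a : ℕ) : Ordinal) ∈ insert ((b : ℕ) : Ordinal.{0}) s₀ := by
          rw [← h1]; exact Finset.mem_insert_self _ _
        rcases Finset.mem_insert.mp ha with h | h
        · exact_mod_cast h
        · exact absurd h a.2
      exact Subtype.ext this
    have hmk : Cardinal.mk (Set.range f) = Cardinal.lift.{1,0} ℵ₀ := by
      have h1 := Cardinal.mk_range_eq_of_injective hfinj
      rw [Cardinal.lift_uzero] at h1
      have h2 : Cardinal.mk K = ℵ₀ := Cardinal.mk_eq_aleph0 _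
      rw [h1, h2]
    obtain ⟨x, hx, y, hy, hxy, hmono⟩ := hd (Set.range f) hmk δ'
    obtain ⟨a, rfl⟩ := hx
    obtain ⟨b, rfl⟩ := hy
    have hvu : ∀ o ∈ (insert ((a:ℕ) : Ordinal.{0}) s₀) ∪ (insert ((b:ℕ):Ordinal.{0}) s₀),
        o < Cardinal.ord ℵ₀ := by
      intro o ho
      rcases Finset.mem_union.mp ho with h | h
      · exact hvalid _ o h
      · exact hvalid _ o h
    have hz := hmono (osF ℵ₀ _ hvu) ?_ ?_
    · have h3 := hsat _ hvu ((Finset.subset_insert _ _).trans Finset.subset_union_left)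
      exact hδ' (hz.symm.trans h3)
    · simp only [hf, osF_coe, Finset.coe_union]
      exact symmDiff_le_sup
    · simp only [hf, osF_coe, Finset.coe_union]
      exact le_refl _
  · -- unsaturated case : build a chain
    push_neg at hA
    have hB : ∀ s : Finset Ordinal.{0}, (∀ o ∈ s, o < Cardinal.ord ℵ₀) →
        ∃ t : Finset Ordinal.{0}, ∃ ht : (∀ o ∈ t, o < Cardinal.ord ℵ₀),
          (s ⊂ t) ∧ d (osF ℵ₀ t ht) ≠ δ₀ := by
      intro s hs
      -- find a fresh tag
      have hfin : {k : ℕ | (k : Ordinal.{0}) ∈ s}.Finite := by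
        apply Set.Finite.preimage _ s.finite_toSet
        intro a _ b _ hab; exact_mod_cast hab
      obtain ⟨k, hk⟩ := hfin.infinite_compl.nonempty
      have hs' : ∀ o ∈ insert (k : Ordinal.{0}) s, o < Cardinal.ord ℵ₀ := by
        intro o ho
        rcases Finset.mem_insert.mp ho with h | h
        · rw [h, hord]; exact Ordinal.nat_lt_omega0 k
        · exact hs o h
      obtain ⟨t, ht, hsub, hne'⟩ := hA δ₀ (insert (k : Ordinal.{0}) s) hs'
      refine ⟨t, ht, ?_, hne'⟩
      refine Finset.ssubset_of_ssubset_of_subset ?_ hsub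
      exact Finset.ssubset_insert (by exact_mod_cast hk)
    choose F hFv hFss hFne using hB
    have hempty : ∀ o ∈ (∅ : Finset Ordinal.{0}), o < Cardinal.ord ℵ₀ := by simp
    let zr : ℕ → {s : Finset Ordinal.{0} // ∀ o ∈ s, o < Cardinal.ord ℵ₀} := fun n =>
      Nat.rec ⟨F ∅ hempty, hFv ∅ hempty⟩ (fun _ p => ⟨F p.1 p.2, hFv p.1 p.2⟩) n
    have hzd : ∀ n, d (osF ℵ₀ (zr n).1 (zr n).2) ≠ δ₀ := by
      intro n
      cases n with
      | zero => exact hFne ∅ hempty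
      | succ m => exact hFne (zr m).1 (zr m).2
    have hzss : ∀ n, (zr n).1 ⊂ (zr (n+1)).1 := fun n => hFss (zr n).1 (zr n).2
    have hzmono : ∀ {i j : ℕ}, i < j → (zr i).1 ⊂ (zr j).1 := by
      intro i j hij
      induction j with
      | zero => omega
      | succ m ih =>
        rcases Nat.lt_succ_iff_lt_or_eq.mp hij with h | h
        · exact (ih h).trans (hzss m)
        · exact h ▸ hzss i
    set g : ℕ → OSet ℵ₀ ℵ₀ := fun n => osF ℵ₀ (zr n).1 (zr n).2 with hg
    have hginj : Function.Injective g := by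
      intro i j hij
      by_contra hne'
      rcases Nat.lt_or_ge i j with h | h
      · exact absurd (osF_inj hij) (hzmono h).ne
      · exact absurd (osF_inj hij).symm (hzmono (by omega)).ne
    have hmk : Cardinal.mk (Set.range g) = Cardinal.lift.{1,0} ℵ₀ := by
      have := Cardinal.mk_range_eq_of_injective hginj
      rw [Cardinal.lift_uzero] at this
      rw [this]; simp
    obtain ⟨x, hx, y, hy, hxy, hmono⟩ := hd (Set.range g) hmk δ₀
    obtain ⟨i, rfl⟩ := hx
    obtain ⟨j, rfl⟩ := hy
    have hij : i ≠ j := fun hcc => hxy (hcc ▸ rfl)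
    have key : ∀ a b : ℕ, a < b →
        (∀ z : OSet ℵ₀ ℵ₀, symmDiff (g a).1 (g b).1 ⊆ z.1 → z.1 ⊆ (g a).1 ∪ (g b).1 →
          d z = δ₀) → False := by
      intro a b hab hm
      have hsub : ((zr a).1 : Set Ordinal.{0}) ⊆ ((zr b).1 : Set Ordinal.{0}) := by
        exact_mod_cast (hzmono hab).subset
      have := hm (g b) ?_ ?_
      · exact hzd b this
      · rw [hg]; simp only [osF_coe]
        rw [symmDiff_of_le hsub]
        exact Set.diff_subset
      · exact Set.subset_union_right
    rcases Nat.lt_or_ge i j with h | h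
    · exact key i j h hmono
    · refine key j i (by omega) ?_
      intro z h1 h2
      exact hmono z (by rwa [symmDiff_comm]) (by rwa [Set.union_comm])


/-- ### finite `κ`, `θ = κ`: chain refutation -/
lemma not_Pl_finite {κ θ : Cardinal.{0}} (hκ : κ < ℵ₀) (hκ1 : 1 ≤ κ) (hθeq : θ = κ) :
    ¬ Pl κ θ := by
  rintro ⟨d, hd⟩
  obtain ⟨n, hn⟩ : ∃ n : ℕ, (n : Cardinal.{0}) = κ := ⟨κ.toNat, Cardinal.cast_toNat_of_lt_aleph0 hκ⟩
  have hn1 : 1 ≤ n := by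
    by_contra hc
    have : n = 0 := by omega
    rw [this] at hn
    rw [← hn] at hκ1
    simp at hκ1
  have hordκ : κ.ord = (n : Ordinal.{0}) := by rw [← hn, Cardinal.ord_nat]
  -- the chain
  set cs : ℕ → Finset Ordinal.{0} := fun j => (Finset.range j).image (Nat.cast) with hcs
  have hval : ∀ j, j < n → ∀ o ∈ cs j, o < κ.ord := by
    intro j hj o ho
    rw [hcs] at ho
    simp only [Finset.mem_image, Finset.mem_range] at ho
    obtain ⟨i, hi, rfl⟩ := ho
    rw [hordκ]
    exact_mod_cast (by omega : i < n)
  have hcard : ∀ j, (cs j).card = j := by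
    intro j
    rw [hcs]
    rw [Finset.card_image_of_injective _ (fun a b hab => by exact_mod_cast hab)]
    exact Finset.card_range j
  have hsub : ∀ {i j : ℕ}, i ≤ j → cs i ⊆ cs j := by
    intro i j hij
    exact Finset.image_subset_image (Finset.range_subset_range.mpr hij)
  set g : Fin n → OSet κ ℵ₀ := fun j => osF κ (cs j.val) (hval j.val j.2) with hg
  have hginj : Function.Injective g := by
    intro i j hij
    have := osF_inj hij
    have hc : (cs i.val).card = (cs j.val).card := by rw [this]
    rw [hcard, hcard] at hc
    exact Fin.ext hc
  have hmk : Cardinal.mk (Set.range g) = Cardinal.lift.{1,0} κ := by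
    have h1 := Cardinal.mk_range_eq_of_injective hginj
    rw [Cardinal.lift_uzero] at h1
    rw [h1, Cardinal.mk_fin, ← hn, Cardinal.lift_natCast]
  have main : ∀ δ : θ.ord.ToType, ∃ k : Fin n, 0 < k.val ∧ d (g k) = δ := by
    intro δ
    obtain ⟨x, hx, y, hy, hxy, hmono⟩ := hd (Set.range g) hmk δ
    obtain ⟨i, rfl⟩ := hx
    obtain ⟨j, rfl⟩ := hy
    have hij : i ≠ j := fun hc => hxy (by rw [hc])
    have key : ∀ a b : Fin n, a.val < b.val →
        (∀ z : OSet κ ℵ₀, symmDiff (g a).1 (g b).1 ⊆ z.1 → z.1 ⊆ (g a).1 ∪ (g b).1 →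
          d z = δ) → ∃ k : Fin n, 0 < k.val ∧ d (g k) = δ := by
      intro a b hab hm
      refine ⟨b, by omega, ?_⟩
      have hsub' : ((cs a.val : Set Ordinal.{0})) ⊆ (cs b.val : Set Ordinal.{0}) := by
        exact_mod_cast hsub (le_of_lt hab)
      refine hm (g b) ?_ ?_
      · rw [hg]; simp only [osF_coe]
        rw [symmDiff_of_le hsub']
        exact Set.diff_subset
      · exact Set.subset_union_right
    rcases Nat.lt_or_ge i.val j.val with h | h
    · exact key i j h hmono
    · refine key j i (by omega) ?_
      intro z h1 h2
      exact hmono z (by rwa [symmDiff_comm]) (by rwa [Set.union_comm])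
  -- counting contradiction
  haveI hCfin : Finite θ.ord.ToType := by
    rw [← Cardinal.lt_aleph0_iff_finite, colors_mk, hθeq]
    exact hκ
  have hCcard : Nat.card θ.ord.ToType = n := by
    have : Cardinal.mk θ.ord.ToType = (n : Cardinal) := by rw [colors_mk, hθeq, hn]
    rw [Nat.card, this, Cardinal.toNat_natCast]
  classical
  set z0 : Fin n := ⟨0, by omega⟩ with hz0
  set F : θ.ord.ToType → {k : Fin n // k ≠ z0} := fun δ =>
    ⟨(main δ).choose, by
      have := (main δ).choose_spec.1
      intro hc
      rw [hc, hz0] at this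
      simp at this⟩ with hF
  have hFinj : Function.Injective F := by
    intro δ δ' hδδ
    have h1 := (main δ).choose_spec.2
    have h2 := (main δ').choose_spec.2
    have : (main δ).choose = (main δ').choose := by
      have := congrArg Subtype.val hδδ
      exact this
    rw [← h1, ← h2, this]
  have hle := Nat.card_le_card_of_injective F hFinj
  have hsub_card : Nat.card {k : Fin n // k ≠ z0} = n - 1 := by
    rw [Nat.card_eq_fintype_card]
    have : Fintype.card {k : Fin n // k ≠ z0} = Fintype.card (Fin n) - 1 := by
      rw [Fintype.card_subtype_compl, Fintype.card_subtype_eq]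
    rw [this, Fintype.card_fin]
  rw [hCcard, hsub_card] at hle
  omega

/-- ### finite `κ`, `1 ≤ θ < κ`: direct coloring -/
lemma finite_direct {G : Type} [AddCommSemigroup G]
    (hcancel : ∀ a b c : G, a + c = b + c → a = b)
    {θ : Cardinal.{0}} (hfin : Cardinal.mk G < ℵ₀) (hθ1 : 1 ≤ θ) (hθlt : θ < Cardinal.mk G) :
    ∃ c : G → θ.ord.ToType,
      ∀ X : Set G, Cardinal.mk X = Cardinal.mk G →
        ∀ δ : θ.ord.ToType, ∃ x ∈ X, ∃ y ∈ X, x ≠ y ∧ c (x + y) = δ := by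
  classical
  haveI hGfin : Finite G := Cardinal.lt_aleph0_iff_finite.mp hfin
  haveI hGne : Nonempty G := by
    rw [← Cardinal.mk_ne_zero_iff]
    intro hc
    rw [hc] at hθlt
    exact absurd (hθ1.trans_lt hθlt) (by simp)
  haveI hCne : Nonempty θ.ord.ToType := by
    rw [← Cardinal.mk_ne_zero_iff, colors_mk]
    intro hc
    rw [hc] at hθ1
    simp at hθ1
  obtain ⟨g₀⟩ := hGne
  set T : Set G := ({g₀} : Set G)ᶜ with hT
  have haddinj : Function.Injective (fun y : G => g₀ + y) := by
    intro a b hab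
    simp only at hab
    apply hcancel a b g₀
    rw [add_comm a g₀, add_comm b g₀]
    exact hab
  set S : Set G := (fun y : G => g₀ + y) '' T with hS
  have hTS : Cardinal.mk S = Cardinal.mk T := Cardinal.mk_image_eq haddinj
  have hsum : 1 + Cardinal.mk T = Cardinal.mk G := by
    have := Cardinal.mk_sum_compl ({g₀} : Set G)
    rw [Cardinal.mk_singleton] at this
    rw [← this, hT]
  have hθT : θ ≤ Cardinal.mk T := by
    -- finite arithmetic
    have hTfin : Cardinal.mk T < ℵ₀ := lt_of_le_of_lt (Cardinal.mk_set_le _) hfin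
    have hθfin : θ < ℵ₀ := hθlt.trans hfin
    obtain ⟨a, ha⟩ : ∃ a : ℕ, (a : Cardinal.{0}) = θ := ⟨_, Cardinal.cast_toNat_of_lt_aleph0 hθfin⟩
    obtain ⟨b, hb⟩ : ∃ b : ℕ, (b : Cardinal.{0}) = Cardinal.mk T :=
      ⟨_, Cardinal.cast_toNat_of_lt_aleph0 hTfin⟩
    have h0 : (a : Cardinal.{0}) < 1 + (b : Cardinal.{0}) := by
      rw [ha, hb, hsum]; exact hθlt
    have h0' : (a : Cardinal.{0}) < ((1 + b : ℕ) : Cardinal.{0}) := by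
      rwa [Nat.cast_add, Nat.cast_one]
    rw [Nat.cast_lt] at h0'
    rw [← ha, ← hb, Nat.cast_le]
    omega
  have hinj : Nonempty (θ.ord.ToType ↪ S) := by
    rw [← Cardinal.le_def, colors_mk, hTS]
    exact hθT
  obtain ⟨ι⟩ := hinj
  have hιinj : Function.Injective (fun δ => ((ι δ : S) : G)) := by
    intro a b hab
    exact ι.injective (Subtype.ext hab)
  set c : G → θ.ord.ToType := fun g =>
    if hg : ∃ δ : θ.ord.ToType, ((ι δ : S) : G) = g then hg.choose else Classical.arbitrary _
    with hc
  have hcspec : ∀ δ : θ.ord.ToType, c ((ι δ : S) : G) = δ := by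
    intro δ
    have hex : ∃ δ' : θ.ord.ToType, ((ι δ' : S) : G) = ((ι δ : S) : G) := ⟨δ, rfl⟩
    simp only [hc]
    rw [dif_pos hex]
    exact hιinj hex.choose_spec
  refine ⟨c, ?_⟩
  intro X hX δ
  -- `X` is everything
  have hXuniv : X = Set.univ := by
    by_contra hc'
    obtain ⟨g, hg⟩ : ∃ g, g ∉ X := by
      by_contra hc''
      push_neg at hc''
      exact hc' (Set.eq_univ_of_forall hc'')
    have hsubset : X ⊆ ({g} : Set G)ᶜ := by
      intro a ha
      simp only [Set.mem_compl_iff, Set.mem_singleton_iff]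
      intro hag
      exact hg (hag ▸ ha)
    set W : Set G := ({g} : Set G)ᶜ with hW
    have h1 : Cardinal.mk X ≤ Cardinal.mk W := Cardinal.mk_le_mk_of_subset hsubset
    have h2 : 1 + Cardinal.mk W = Cardinal.mk G := by
      have := Cardinal.mk_sum_compl ({g} : Set G)
      rw [Cardinal.mk_singleton] at this
      rw [← this, hW]
    have hcfin : Cardinal.mk W < ℵ₀ := lt_of_le_of_lt (Cardinal.mk_set_le _) hfin
    obtain ⟨b, hb⟩ : ∃ b : ℕ, (b : Cardinal.{0}) = Cardinal.mk W :=
      ⟨_, Cardinal.cast_toNat_of_lt_aleph0 hcfin⟩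
    rw [hX] at h1
    rw [← h2, ← hb] at h1
    have : ((1 + b : ℕ) : Cardinal.{0}) ≤ (b : Cardinal.{0}) := by
      rw [Nat.cast_add, Nat.cast_one]
      exact h1
    rw [Nat.cast_le] at this
    omega
  obtain ⟨y, hyT, hy⟩ := (ι δ).2
  refine ⟨g₀, by rw [hXuniv]; trivial, y, by rw [hXuniv]; trivial, ?_, ?_⟩
  · intro hc'
    rw [hT] at hyT
    simp only [Set.mem_compl_iff, Set.mem_singleton_iff] at hyT
    exact hyT (hc'.symm)
  · have hy' : g₀ + y = ((ι δ : S) : G) := hy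
    rw [hy']
    exact hcspec δ

/-! ### Embedding an abelian group into a direct sum of countable groups -/

abbrev EE (H : Type) : Type := (H × ℕ) →₀ (ℚ × AddCircle (1:ℚ))

lemma countable_QAC : Countable (ℚ × AddCircle (1:ℚ)) := by
  haveI : Countable (AddCircle (1:ℚ)) := by
    exact Quotient.countable
  infer_instance

def Good (H : Type) [AddCommGroup H] (Γ : Set (H × EE H)) : Prop :=
  (0 : H × EE H) ∈ Γ ∧
  (∀ p ∈ Γ, ∀ q ∈ Γ, p - q ∈ Γ) ∧
  (∀ e : EE H, ((0 : H), e) ∈ Γ → e = 0) ∧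
  (∀ x : H, (x, (0 : EE H)) ∈ Γ → x = 0) ∧
  (∀ p ∈ Γ, ∀ j ∈ (Prod.snd p).support, ∃ e : EE H, (Prod.fst j, e) ∈ Γ)

lemma Good.neg_mem {H : Type} [AddCommGroup H] {Γ : Set (H × EE H)} (hΓ : Good H Γ)
    {p : H × EE H} (hp : p ∈ Γ) : -p ∈ Γ := by
  have := hΓ.2.1 0 hΓ.1 p hp
  simpa using this

lemma Good.add_mem {H : Type} [AddCommGroup H] {Γ : Set (H × EE H)} (hΓ : Good H Γ)
    {p q : H × EE H} (hp : p ∈ Γ) (hq : q ∈ Γ) : p + q ∈ Γ := by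
  have := hΓ.2.1 p hp (-q) (hΓ.neg_mem hq)
  simpa [sub_neg_eq_add] using this

lemma Good.zsmul_mem {H : Type} [AddCommGroup H] {Γ : Set (H × EE H)} (hΓ : Good H Γ)
    {p : H × EE H} (hp : p ∈ Γ) : ∀ k : ℤ, k • p ∈ Γ := by
  intro k
  induction k using Int.induction_on with
  | zero => simpa using hΓ.1
  | succ n ih =>
    have := hΓ.add_mem ih hp
    rw [add_zsmul, one_zsmul]
    exact this
  | pred n ih =>
    have h2 := hΓ.2.1 _ ih p hp
    have h3 : (-(n:ℤ) - 1) • p = (-(n:ℤ)) • p - p := by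
      rw [sub_zsmul, one_zsmul, sub_eq_add_neg]
    rw [h3]
    exact h2

lemma exists_embedding (H : Type) [AddCommGroup H] :
    ∃ φ : H → EE H,
      Function.Injective φ ∧ ∀ x y : H, φ (x + y) = φ x + φ y := by
  classical
  -- division in the codomain
  have hAdiv : ∀ (m : ℕ), 0 < m → ∀ a : ℚ × AddCircle (1:ℚ), ∃ b, (m:ℤ) • b = a := by
    intro m hm a
    obtain ⟨q, hq⟩ : ∃ q : ℚ, (q : AddCircle (1:ℚ)) = a.2 := Quotient.exists_rep a.2
    refine ⟨(a.1 / m, ((q / m : ℚ) : AddCircle (1:ℚ))), ?_⟩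
    have h1 : (m:ℤ) • (a.1 / (m:ℚ)) = a.1 := by
      rw [zsmul_eq_mul]
      push_cast
      field_simp
    have h2 : (m:ℤ) • ((q / m : ℚ) : AddCircle (1:ℚ)) = a.2 := by
      rw [← AddCircle.coe_zsmul]
      have h3 : (m:ℤ) • (q / m : ℚ) = q := by
        rw [zsmul_eq_mul]
        push_cast
        field_simp
      rw [h3, hq]
    exact Prod.ext h1 h2
  have hEdiv : ∀ (m : ℕ), 0 < m → ∀ w : EE H,
      ∃ v : EE H, (m:ℤ) • v = w ∧ v.support ⊆ w.support := by
    intro m hm w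
    set dv : (ℚ × AddCircle (1:ℚ)) → (ℚ × AddCircle (1:ℚ)) := fun a =>
      if ha : a = 0 then 0 else (hAdiv m hm a).choose with hdv
    have hdv0 : dv 0 = 0 := by rw [hdv]; simp
    refine ⟨w.mapRange dv hdv0, ?_, Finsupp.support_mapRange⟩
    refine Finsupp.ext fun j => ?_
    rw [Finsupp.smul_apply, Finsupp.mapRange_apply]
    by_cases hj : w j = 0
    · rw [hj, hdv0, smul_zero]
    · rw [hdv]
      simp only [dif_neg hj]
      exact (hAdiv m hm (w j)).choose_spec
  -- Zorn's lemma
  set P : Set (Set (H × EE H)) := {Γ | Good H Γ} with hP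
  have hchain : ∀ c ⊆ P, IsChain (· ⊆ ·) c → c.Nonempty →
      ∃ ub ∈ P, ∀ s ∈ c, s ⊆ ub := by
    intro c hcP hchain ⟨Γ₁, hΓ₁⟩
    refine ⟨⋃₀ c, ?_, fun s hs => Set.subset_sUnion_of_mem hs⟩
    refine ⟨⟨Γ₁, hΓ₁, (hcP hΓ₁).1⟩, ?_, ?_, ?_, ?_⟩
    · rintro p ⟨Γp, hΓp, hp⟩ q ⟨Γq, hΓq, hq⟩
      rcases hchain.total hΓp hΓq with hle | hle
      · exact ⟨Γq, hΓq, (hcP hΓq).2.1 p (hle hp) q hq⟩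
      · exact ⟨Γp, hΓp, (hcP hΓp).2.1 p hp q (hle hq)⟩
    · rintro e ⟨Γe, hΓe, he⟩
      exact (hcP hΓe).2.2.1 e he
    · rintro x ⟨Γx, hΓx, hx⟩
      exact (hcP hΓx).2.2.2.1 x hx
    · rintro p ⟨Γp, hΓp, hp⟩ j hj
      obtain ⟨e, he⟩ := (hcP hΓp).2.2.2.2 p hp j hj
      exact ⟨e, Γp, hΓp, he⟩
  have hsingle : ({(0 : H × EE H)} : Set (H × EE H)) ∈ P := by
    refine ⟨rfl, ?_, ?_, ?_, ?_⟩
    · rintro p rfl q rfl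
      simp
    · rintro e he
      have : ((0 : H), e) = ((0:H), (0 : EE H)) := he
      exact (Prod.mk.injEq _ _ _ _).mp this |>.2
    · rintro x hx
      have : (x, (0 : EE H)) = ((0:H), (0 : EE H)) := hx
      exact (Prod.mk.injEq _ _ _ _).mp this |>.1
    · rintro p rfl j hj
      simp at hj
  obtain ⟨M, -, hMmax⟩ := zorn_subset_nonempty P hchain _ hsingle
  have hMgood : Good H M := hMmax.1
  have hM0 := hMgood.1
  have hMsub := hMgood.2.1
  have hM1a := hMgood.2.2.1
  have hM1b := hMgood.2.2.2.1
  have hM2 := hMgood.2.2.2.2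
  -- every element is in the domain
  have hDom : ∀ x : H, ∃ e : EE H, (x, e) ∈ M := by
    by_contra hcon
    push_neg at hcon
    obtain ⟨h, hh⟩ := hcon
    -- generic extension step
    have extend : ∀ v : EE H,
        (∀ k : ℤ, (∃ e, (k • h, e) ∈ M) → ((k • h, k • v) : H × EE H) ∈ M) →
        (∀ k : ℤ, k • (v (h, 0)) = 0 → ∃ e, (k • h, e) ∈ M) →
        (∀ j ∈ v.support, (∃ e, (Prod.fst j, e) ∈ M) ∨ j = ((h, 0) : H × ℕ)) →
        False := by
      intro v hK1 hK2 hV3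
      set M' : Set (H × EE H) :=
        {p' | ∃ p ∈ M, ∃ k : ℤ, p' = p + k • ((h, v) : H × EE H)} with hM'
      have hMM' : M ⊆ M' := by
        intro p hp
        exact ⟨p, hp, 0, by simp⟩
      have hhv : ((h, v) : H × EE H) ∈ M' := ⟨0, hM0, 1, by simp⟩
      have hM'good : Good H M' := by
        refine ⟨hMM' hM0, ?_, ?_, ?_, ?_⟩
        · rintro p' ⟨p, hp, k, rfl⟩ q' ⟨q, hq, k', rfl⟩
          refine ⟨p - q, hMsub p hp q hq, k - k', ?_⟩
          rw [sub_zsmul]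
          abel
        · rintro e' ⟨⟨p1, p2⟩, hp, k, hpk⟩
          simp only [Prod.smul_mk, Prod.mk_add_mk, Prod.mk.injEq] at hpk
          obtain ⟨hpk1, hpk2⟩ := hpk
          have hdom : ∃ e, (k • h, e) ∈ M := by
            refine ⟨-p2, ?_⟩
            have := hMgood.neg_mem hp
            have hkh : k • h = -p1 := by
              rw [eq_comm, neg_eq_iff_add_eq_zero]
              exact hpk1.symm
            rw [hkh]
            exact this
          have hsum := hMgood.add_mem hp (hK1 k hdom)
          rw [Prod.mk_add_mk] at hsum
          rw [← hpk1, ← hpk2] at hsum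
          exact hM1a e' hsum
        · rintro x' ⟨⟨p1, p2⟩, hp, k, hpk⟩
          simp only [Prod.smul_mk, Prod.mk_add_mk, Prod.mk.injEq] at hpk
          obtain ⟨hpk1, hpk2⟩ := hpk
          -- evaluate the second coordinate at (h,0)
          have hp2at : p2 (h, 0) = 0 := by
            rw [← Finsupp.notMem_support_iff]
            intro hmem
            obtain ⟨e, he⟩ := hM2 (p1, p2) hp (h, 0) hmem
            exact hh e he
          have hvk : k • (v (h, 0)) = 0 := by
            have := congrArg (fun f : EE H => f (h, 0)) hpk2
            simp only [Finsupp.add_apply, Finsupp.coe_smul, Pi.smul_apply,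
              Finsupp.coe_zero, Pi.zero_apply] at this
            rw [hp2at, zero_add] at this
            exact this.symm
          have hdom := hK2 k hvk
          have hsum := hMgood.add_mem hp (hK1 k hdom)
          rw [Prod.mk_add_mk] at hsum
          rw [← hpk1, ← hpk2] at hsum
          have := hM1b x' hsum
          exact this
        · rintro p' ⟨⟨p1, p2⟩, hp, k, rfl⟩ j hj
          simp only [Prod.mk_add_mk, Prod.smul_mk] at hj ⊢
          have hj' : j ∈ (p2 + k • v).support := hj
          have := Finsupp.support_add hj'
          rcases Finset.mem_union.mp this with hcase | hcase
          · obtain ⟨e, he⟩ := hM2 (p1, p2) hp j hcase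
            exact ⟨e, hMM' he⟩
          · have hjv : j ∈ v.support := Finsupp.support_smul hcase
            rcases hV3 j hjv with ⟨e, he⟩ | rfl
            · exact ⟨e, hMM' he⟩
            · exact ⟨v, hhv⟩
      have hM'sub := hMmax.2 hM'good hMM'
      exact hh v (hM'sub hhv)
    -- the subgroup of ℤ of multiples landing in the domain
    set ZS : AddSubgroup ℤ :=
      { carrier := {k : ℤ | ∃ e, (k • h, e) ∈ M}
        zero_mem' := ⟨0, by simpa [Prod.mk_zero_zero] using hM0⟩
        add_mem' := by
          rintro k k' ⟨e, he⟩ ⟨e', he'⟩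
          refine ⟨e + e', ?_⟩
          have := hMgood.add_mem he he'
          rw [Prod.mk_add_mk, ← add_zsmul] at this
          exact this
        neg_mem' := by
          rintro k ⟨e, he⟩
          refine ⟨-e, ?_⟩
          have := hMgood.neg_mem he
          simp only [Prod.neg_mk, ← neg_zsmul] at this
          exact this } with hZS
    obtain ⟨a, ha⟩ := Int.subgroup_cyclic ZS
    have hZSmem : ∀ k : ℤ, (∃ e, (k • h, e) ∈ M) ↔ ∃ n : ℤ, n • a = k := by
      intro k
      constructor
      · intro hk
        have : k ∈ ZS := hk
        rw [ha, AddSubgroup.mem_closure_singleton] at this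
        exact this
      · intro hn
        have : k ∈ ZS := by
          rw [ha, AddSubgroup.mem_closure_singleton]
          exact hn
        exact this
    by_cases ha0 : a = 0
    · -- free case
      set v : EE H := Finsupp.single ((h, 0) : H × ℕ) ((1:ℚ), (0 : AddCircle (1:ℚ))) with hv
      have hzero : ∀ k : ℤ, (∃ e, (k • h, e) ∈ M) → k = 0 := by
        intro k hk
        obtain ⟨n, hn⟩ := (hZSmem k).mp hk
        rw [ha0] at hn
        simpa using hn.symm
      refine extend v ?_ ?_ ?_
      · intro k hk
        rw [hzero k hk]
        simpa [Prod.mk_zero_zero] using hM0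
      · intro k hk
        have hvat : v ((h, 0) : H × ℕ) = ((1:ℚ), (0 : AddCircle (1:ℚ))) := by
          rw [hv]; exact Finsupp.single_eq_same
        rw [hvat] at hk
        have h1 : k • ((1:ℚ), (0 : AddCircle (1:ℚ))) =
            ((k : ℚ), (0 : AddCircle (1:ℚ))) := by
          rw [Prod.smul_mk, smul_zero, zsmul_eq_mul, mul_one]
        rw [h1] at hk
        have h2 : (k : ℚ) = 0 := ((Prod.mk.injEq _ _ _ _).mp hk).1
        have h3 : k = 0 := by exact_mod_cast h2
        rw [h3]
        exact ⟨0, by simpa [Prod.mk_zero_zero] using hM0⟩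
      · intro j hj
        right
        have := Finsupp.support_single_subset hj
        simpa using this
    · -- torsion case
      set m : ℕ := a.natAbs with hmdef
      have hm : 0 < m := Int.natAbs_pos.mpr ha0
      have hdvd : ∀ k : ℤ, (∃ e, (k • h, e) ∈ M) → (m : ℤ) ∣ k := by
        intro k hk
        obtain ⟨n, hn⟩ := (hZSmem k).mp hk
        rw [Int.natAbs_dvd]
        exact ⟨n, by rw [← hn, smul_eq_mul, mul_comm]⟩
      have haZS : a ∈ ZS := by
        rw [ha]
        exact AddSubgroup.mem_closure_singleton.mpr ⟨1, one_smul _ _⟩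
      have h1ma : ((m:ℤ)) = a ∨ ((m:ℤ)) = -a := by
        rw [hmdef]; omega
      have hmZS : ((m:ℤ)) ∈ ZS := by
        rcases h1ma with h1 | h1
        · rw [h1]; exact haZS
        · rw [h1]; exact ZS.neg_mem haZS
      obtain ⟨w, hw⟩ : ∃ e, (((m:ℤ)) • h, e) ∈ M := hmZS
      obtain ⟨v₀, hv₀smul, hv₀supp⟩ := hEdiv m hm w
      have hwsupp : ∀ j ∈ w.support, ∃ e, (Prod.fst j, e) ∈ M :=
        fun j hj => hM2 _ hw j hj
      have hv₀at : v₀ ((h, 0) : H × ℕ) = 0 := by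
        rw [← Finsupp.notMem_support_iff]
        intro hmem
        obtain ⟨e, he⟩ := hwsupp _ (hv₀supp hmem)
        exact hh e he
      set v : EE H := v₀ + Finsupp.single ((h, 0) : H × ℕ)
          ((0:ℚ), (((1:ℚ)/m : ℚ) : AddCircle (1:ℚ))) with hv
      have hvat : v ((h, 0) : H × ℕ) = ((0:ℚ), (((1:ℚ)/m : ℚ) : AddCircle (1:ℚ))) := by
        rw [hv, Finsupp.add_apply, hv₀at, zero_add, Finsupp.single_eq_same]
      have hone : ((1:ℚ) : AddCircle (1:ℚ)) = 0 := by
        rw [AddCircle.coe_eq_zero_iff]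
        exact ⟨1, by simp⟩
      have hmv : (m:ℤ) • v = w := by
        rw [hv, smul_add, hv₀smul, Finsupp.smul_single]
        have h2 : (m:ℤ) • (((0:ℚ), (((1:ℚ)/m : ℚ) : AddCircle (1:ℚ)))) =
            (0 : ℚ × AddCircle (1:ℚ)) := by
          rw [Prod.smul_mk, smul_zero]
          have h3 : (m:ℤ) • ((((1:ℚ)/m : ℚ)) : AddCircle (1:ℚ)) = 0 := by
            rw [← AddCircle.coe_zsmul]
            have h4 : (m:ℤ) • ((1:ℚ)/m : ℚ) = 1 := by
              rw [zsmul_eq_mul]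
              push_cast
              field_simp
            rw [h4, hone]
          rw [h3]
          rfl
        rw [h2, Finsupp.single_zero, add_zero]
      refine extend v ?_ ?_ ?_
      · intro k hk
        obtain ⟨s, hs⟩ := hdvd k hk
        have hkv : (k • ((h, v) : H × EE H)) = s • (((m:ℤ) • h, w) : H × EE H) := by
          rw [hs, mul_comm, mul_smul]
          congr 1
          rw [Prod.smul_mk, hmv]
        have hmem := hMgood.zsmul_mem hw s
        have : ((k • h, k • v) : H × EE H) = k • ((h, v) : H × EE H) := by
          rw [Prod.smul_mk]
        rw [this, hkv]
        exact hmem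
      · intro k hk
        rw [hvat] at hk
        have h1 : k • (((1:ℚ)/m : ℚ) : AddCircle (1:ℚ)) = 0 := by
          have := congrArg Prod.snd hk
          simpa using this
        rw [← AddCircle.coe_zsmul, AddCircle.coe_eq_zero_iff] at h1
        obtain ⟨n, hn⟩ := h1
        have h2 : (m:ℤ) ∣ k := by
          have hm0 : (m:ℚ) ≠ 0 := by exact_mod_cast hm.ne'
          rw [zsmul_eq_mul, zsmul_eq_mul] at hn
          have h5 : (k : ℚ) = (m:ℚ) * (n:ℚ) := by
            field_simp at hn
            linarith
          exact ⟨n, by exact_mod_cast h5⟩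
        obtain ⟨s, hs⟩ := h2
        refine ⟨s • w, ?_⟩
        have hmem := hMgood.zsmul_mem hw s
        rw [Prod.smul_mk] at hmem
        have : k • h = s • ((m:ℤ) • h) := by
          rw [hs, mul_comm, mul_smul]
        rw [this]
        exact hmem
      · intro j hj
        rw [hv] at hj
        have := Finsupp.support_add hj
        rcases Finset.mem_union.mp this with hcase | hcase
        · exact Or.inl (hwsupp _ (hv₀supp hcase))
        · right
          have := Finsupp.support_single_subset hcase
          simpa using this
  -- define the embedding
  choose φ hφ using hDom
  refine ⟨φ, ?_, ?_⟩
  · intro x y hxy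
    have h1 : ((x, φ x) : H × EE H) - (y, φ y) ∈ M := hMsub _ (hφ x) _ (hφ y)
    have h2 : ((x - y, (0 : EE H)) : H × EE H) ∈ M := by
      have : ((x, φ x) : H × EE H) - (y, φ y) = (x - y, φ x - φ y) := rfl
      rw [this, hxy, sub_self] at h1
      exact h1
    have := hM1b _ h2
    exact sub_eq_zero.mp this
  · intro x y
    have h1 : ((x, φ x) : H × EE H) + (y, φ y) ∈ M := hMgood.add_mem (hφ x) (hφ y)
    have h2 : ((x + y, φ x + φ y) : H × EE H) ∈ M := h1
    have h3 := hMsub _ (hφ (x + y)) _ h2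
    have h4 : ((0 : H), φ (x + y) - (φ x + φ y)) ∈ M := by
      have : ((x + y, φ (x+y)) : H × EE H) - (x + y, φ x + φ y)
          = (0, φ (x+y) - (φ x + φ y)) := by
        rw [Prod.mk_sub_mk, sub_self]
      rw [← this]
      exact h3
    have := hM1a _ h4
    exact sub_eq_zero.mp this

/-! ### the Grothendieck group of a cancellative commutative semigroup -/

section Groth

variable {G : Type} [AddCommSemigroup G]

def grR (p q : G × G) : Prop := p.1 + q.2 = q.1 + p.2

def grSetoid (hc : ∀ a b c : G, a + c = b + c → a = b) : Setoid (G × G) where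
  r := grR
  iseqv := by
    refine ⟨fun p => rfl, fun {p q} h => h.symm, fun {p q r} h1 h2 => ?_⟩
    apply hc _ _ q.2
    calc p.1 + r.2 + q.2 = p.1 + q.2 + r.2 := by rw [add_right_comm]
      _ = q.1 + p.2 + r.2 := by rw [h1]
      _ = q.1 + r.2 + p.2 := by rw [add_right_comm]
      _ = r.1 + q.2 + p.2 := by rw [h2]
      _ = r.1 + p.2 + q.2 := by rw [add_right_comm]

variable (hc : ∀ a b c : G, a + c = b + c → a = b)

def Gr (hc : ∀ a b c : G, a + c = b + c → a = b) : Type := Quotient (grSetoid hc)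

def grMk (p : G × G) : Gr hc := Quotient.mk (grSetoid hc) p

def grAdd : Gr hc → Gr hc → Gr hc :=
  Quotient.map₂ (fun p q => (p.1 + q.1, p.2 + q.2)) (by
    intro p p' hp q q' hq
    have hp' : p.1 + p'.2 = p'.1 + p.2 := hp
    have hq' : q.1 + q'.2 = q'.1 + q.2 := hq
    show grR _ _
    show (p.1 + q.1) + (p'.2 + q'.2) = (p'.1 + q'.1) + (p.2 + q.2)
    calc (p.1 + q.1) + (p'.2 + q'.2) = (p.1 + p'.2) + (q.1 + q'.2) := add_add_add_comm _ _ _ _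
      _ = (p'.1 + p.2) + (q'.1 + q.2) := by rw [hp', hq']
      _ = (p'.1 + q'.1) + (p.2 + q.2) := add_add_add_comm _ _ _ _)

def grNeg : Gr hc → Gr hc :=
  Quotient.map Prod.swap (by
    intro p q hpq
    have h : p.1 + q.2 = q.1 + p.2 := hpq
    show grR _ _
    show p.2 + q.1 = q.2 + p.1
    calc p.2 + q.1 = q.1 + p.2 := add_comm _ _
      _ = p.1 + q.2 := h.symm
      _ = q.2 + p.1 := add_comm _ _)

lemma grAdd_mk (p q : G × G) :
    grAdd hc (grMk hc p) (grMk hc q) = grMk hc (p.1 + q.1, p.2 + q.2) := rfl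

def grGroup (g₀ : G) : AddCommGroup (Gr hc) :=
  letI addI : Add (Gr hc) := ⟨grAdd hc⟩
  letI zeroI : Zero (Gr hc) := ⟨grMk hc (g₀, g₀)⟩
  letI negI : Neg (Gr hc) := ⟨grNeg hc⟩
  { add := grAdd hc
    zero := grMk hc (g₀, g₀)
    neg := grNeg hc
    nsmul := nsmulRec
    zsmul := zsmulRec
    add_assoc := by
      rintro ⟨a⟩ ⟨b⟩ ⟨c⟩
      refine Quotient.sound ?_
      show grR _ _
      show (a.1 + b.1 + c.1) + (a.2 + (b.2 + c.2)) = (a.1 + (b.1 + c.1)) + (a.2 + b.2 + c.2)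
      simp only [add_assoc]
    zero_add := by
      rintro ⟨a⟩
      refine Quotient.sound ?_
      show grR _ _
      show (g₀ + a.1) + a.2 = a.1 + (g₀ + a.2)
      simp only [add_comm, add_left_comm]
    add_zero := by
      rintro ⟨a⟩
      refine Quotient.sound ?_
      show grR _ _
      show (a.1 + g₀) + a.2 = a.1 + (a.2 + g₀)
      simp only [add_comm, add_left_comm]
    add_comm := by
      rintro ⟨a⟩ ⟨b⟩
      refine Quotient.sound ?_
      show grR _ _
      show (a.1 + b.1) + (b.2 + a.2) = (b.1 + a.1) + (a.2 + b.2)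
      simp only [add_comm, add_left_comm]
    neg_add_cancel := by
      rintro ⟨a⟩
      refine Quotient.sound ?_
      show grR _ _
      show (a.2 + a.1) + g₀ = g₀ + (a.1 + a.2)
      simp only [add_comm, add_left_comm] }

def grι (g₀ : G) : G → Gr hc := fun g => grMk hc (g + g₀, g₀)

lemma grι_inj (g₀ : G) : Function.Injective (grι hc g₀) := by
  intro a b hab
  have h := Quotient.exact hab
  have h' : (a + g₀) + g₀ = (b + g₀) + g₀ := h
  exact hc _ _ _ (hc _ _ _ h')

lemma grι_add (g₀ : G) (x y : G) :
    grι hc g₀ (x + y) = grAdd hc (grι hc g₀ x) (grι hc g₀ y) := by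
  refine (Quotient.sound ?_).symm
  show grR _ _
  show ((x + g₀) + (y + g₀)) + g₀ = ((x + y) + g₀) + (g₀ + g₀)
  simp only [add_comm, add_left_comm]

end Groth

/-! ### the main case: `κ` uncountable -/

lemma main_uncountable {G : Type} [AddCommSemigroup G]
    (hcancel : ∀ a b c : G, a + c = b + c → a = b)
    {θ : Cardinal.{0}} (hκ : ℵ₀ < Cardinal.mk G)
    (h : Pl (Cardinal.mk G) θ) :
    ∃ c : G → θ.ord.ToType,
      ∀ X : Set G, Cardinal.mk X = Cardinal.mk G →
        ∀ δ : θ.ord.ToType, ∃ x ∈ X, ∃ y ∈ X, x ≠ y ∧ c (x + y) = δ := by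
  classical
  obtain ⟨d, hd⟩ := h
  haveI hGne : Nonempty G := by
    rw [← Cardinal.mk_ne_zero_iff]
    intro h0
    rw [h0] at hκ
    exact absurd hκ (by simp)
  obtain ⟨g₀⟩ := hGne
  letI : AddCommGroup (Gr hcancel) := grGroup hcancel g₀
  obtain ⟨φ, hφinj, hφadd⟩ := exists_embedding (Gr hcancel)
  set ι : G → Gr hcancel := grι hcancel g₀ with hι
  have hιinj : Function.Injective ι := grι_inj hcancel g₀
  have hιadd : ∀ x y : G, ι (x + y) = ι x + ι y := fun x y => grι_add hcancel g₀ x y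
  set u : G → Finset (Gr hcancel × ℕ) := fun g => (φ (ι g)).support with hu
  have huinj : Function.Injective (fun g => φ (ι g)) := hφinj.comp hιinj
  have hmkGr : Cardinal.mk (Gr hcancel) = Cardinal.mk G := by
    apply le_antisymm
    · calc Cardinal.mk (Gr hcancel) ≤ Cardinal.mk (G × G) := Cardinal.mk_quotient_le
        _ = Cardinal.mk G * Cardinal.mk G := by
            simp [Cardinal.mk_prod]
        _ = Cardinal.mk G := Cardinal.mul_eq_self hκ.le
    · exact Cardinal.mk_le_of_injective hιinj
  have hmkidx : Cardinal.mk (Gr hcancel × ℕ) = Cardinal.mk G := by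
    have hp : Cardinal.mk (Gr hcancel × ℕ) = Cardinal.mk (Gr hcancel) * ℵ₀ := by
      simp [Cardinal.mk_prod]
    rw [hp, hmkGr, Cardinal.mul_eq_max hκ.le (le_refl _)]
    exact max_eq_left hκ.le
  have hmkT : Cardinal.mk (Cardinal.mk G).ord.ToType = Cardinal.mk G :=
    Cardinal.mk_ord_toType _
  have heqv : Nonempty ((Gr hcancel × ℕ) ≃ (Cardinal.mk G).ord.ToType) := by
    rw [← Cardinal.eq, hmkidx, hmkT]
  obtain ⟨eqv⟩ := heqv
  set EI : (Gr hcancel × ℕ) → Ordinal.{0} :=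
    fun j => (((Ordinal.ToType.mk (o := (Cardinal.mk G).ord)).symm (eqv j) :
      Set.Iio (Cardinal.mk G).ord) : Ordinal.{0}) with hEI
  have hEIlt : ∀ j, EI j < (Cardinal.mk G).ord :=
    fun j => ((Ordinal.ToType.mk (o := (Cardinal.mk G).ord)).symm (eqv j)).2
  have hEIinj : Function.Injective EI := by
    intro a b hab
    apply eqv.injective
    apply (Ordinal.ToType.mk (o := (Cardinal.mk G).ord)).symm.injective
    exact Subtype.ext hab
  have hOsub : ∀ s : Finset (Gr hcancel × ℕ), ∀ o ∈ s.image EI, o < (Cardinal.mk G).ord := by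
    intro s o ho
    obtain ⟨j, -, rfl⟩ := Finset.mem_image.mp ho
    exact hEIlt j
  set Os : Finset (Gr hcancel × ℕ) → OSet (Cardinal.mk G) ℵ₀ :=
    fun s => osF (Cardinal.mk G) (s.image EI) (hOsub s) with hOs
  have hOsinj : Function.Injective Os := by
    intro s t hst
    exact Finset.image_injective hEIinj (osF_inj hst)
  refine ⟨fun g => d (Os (u g)), ?_⟩
  intro X hX δ
  set q : X → Set.range (fun x : X => u x.1) := fun x => ⟨u x.1, ⟨x, rfl⟩⟩ with hq
  have hfib : ∀ b, Cardinal.mk {x : X // q x = b} ≤ ℵ₀ := by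
    intro b
    haveI : Countable (ℚ × AddCircle (1:ℚ)) := countable_QAC
    set Φ : {x : X // q x = b} →
        ({j // j ∈ (b : Finset (Gr hcancel × ℕ))} → (ℚ × AddCircle (1:ℚ))) :=
      fun x => fun j => (φ (ι x.1.1)) j.1 with hΦ
    have hΦinj : Function.Injective Φ := by
      intro x y hxy
      have hbx : u x.1.1 = (b : Finset (Gr hcancel × ℕ)) := congrArg Subtype.val x.2
      have hby : u y.1.1 = (b : Finset (Gr hcancel × ℕ)) := congrArg Subtype.val y.2
      have h1 : φ (ι x.1.1) = φ (ι y.1.1) := by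
        refine Finsupp.ext fun j => ?_
        by_cases hj : j ∈ (b : Finset (Gr hcancel × ℕ))
        · exact congrFun hxy ⟨j, hj⟩
        · have hx0 : φ (ι x.1.1) j = 0 := by
            rw [← Finsupp.notMem_support_iff]
            rw [show (φ (ι x.1.1)).support = (b : Finset (Gr hcancel × ℕ)) from hbx]
            exact hj
          have hy0 : φ (ι y.1.1) j = 0 := by
            rw [← Finsupp.notMem_support_iff]
            rw [show (φ (ι y.1.1)).support = (b : Finset (Gr hcancel × ℕ)) from hby]
            exact hj
          rw [hx0, hy0]
      exact Subtype.ext (Subtype.ext (huinj h1))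
    calc Cardinal.mk {x : X // q x = b} ≤ _ := Cardinal.mk_le_of_injective hΦinj
      _ ≤ ℵ₀ := Cardinal.mk_le_aleph0
  have hYeq : Cardinal.mk (Set.range (fun x : X => u x.1)) = Cardinal.mk G := by
    apply le_antisymm
    · calc Cardinal.mk (Set.range (fun x : X => u x.1))
          ≤ Cardinal.mk X := Cardinal.mk_range_le
        _ = Cardinal.mk G := hX
    · by_contra hlt
      push_neg at hlt
      have h1 : Cardinal.mk X ≤ Cardinal.mk (Set.range (fun x : X => u x.1)) * ℵ₀ := by
        calc Cardinal.mk X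
            = Cardinal.mk (Σ b : Set.range (fun x : X => u x.1), {x : X // q x = b}) :=
              (Cardinal.mk_congr (Equiv.sigmaFiberEquiv q)).symm
          _ = Cardinal.sum (fun b : Set.range (fun x : X => u x.1) =>
                Cardinal.mk {x : X // q x = b}) := Cardinal.mk_sigma _
          _ ≤ Cardinal.sum (fun _ : Set.range (fun x : X => u x.1) => ℵ₀) :=
              Cardinal.sum_le_sum _ _ hfib
          _ = Cardinal.mk (Set.range (fun x : X => u x.1)) * ℵ₀ := Cardinal.sum_const' _ _
      rw [hX] at h1
      have h2 : Cardinal.mk (Set.range (fun x : X => u x.1)) * ℵ₀ < Cardinal.mk G := by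
        calc Cardinal.mk (Set.range (fun x : X => u x.1)) * ℵ₀
            ≤ max (max (Cardinal.mk (Set.range (fun x : X => u x.1))) ℵ₀) ℵ₀ :=
              Cardinal.mul_le_max _ _
          _ < Cardinal.mk G := max_lt (max_lt hlt hκ) hκ
      exact absurd (h1.trans_lt h2) (lt_irrefl _)
  have h𝒳 : Cardinal.mk (Os '' (Set.range (fun x : X => u x.1)))
      = Cardinal.lift.{1,0} (Cardinal.mk G) := by
    have h1 := Cardinal.mk_image_eq_lift Os (Set.range (fun x : X => u x.1)) hOsinj
    rw [Cardinal.lift_uzero] at h1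
    rw [h1, hYeq]
  obtain ⟨x', hx', y', hy', hne', hmono⟩ := hd _ h𝒳 δ
  obtain ⟨s₁, hs₁, rfl⟩ := hx'
  obtain ⟨s₂, hs₂, rfl⟩ := hy'
  obtain ⟨a, ha⟩ := hs₁
  obtain ⟨b, hb⟩ := hs₂
  have ha' : u a.1 = s₁ := ha
  have hb' : u b.1 = s₂ := hb
  have hab : (a : X).1 ≠ (b : X).1 := by
    intro hcc
    apply hne'
    rw [← ha', ← hb', hcc]
  refine ⟨a.1, a.2, b.1, b.2, hab, ?_⟩
  show d (Os (u (a.1 + b.1))) = δ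
  have hsum : φ (ι ((a : X).1 + (b : X).1)) = φ (ι (a : X).1) + φ (ι (b : X).1) := by
    rw [hιadd, hφadd]
  have key1 : symmDiff (u a.1) (u b.1) ⊆ u (a.1 + b.1) := by
    intro j hj
    rw [Finset.mem_symmDiff] at hj
    show j ∈ (φ (ι ((a : X).1 + (b : X).1))).support
    rw [Finsupp.mem_support_iff, hsum, Finsupp.add_apply]
    rcases hj with ⟨hja, hjb⟩ | ⟨hjb, hja⟩
    · have hja' : φ (ι (a : X).1) j ≠ 0 := Finsupp.mem_support_iff.mp hja
      have hjb' : φ (ι (b : X).1) j = 0 := Finsupp.notMem_support_iff.mp hjb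
      rw [hjb', add_zero]
      exact hja'
    · have hjb' : φ (ι (b : X).1) j ≠ 0 := Finsupp.mem_support_iff.mp hjb
      have hja' : φ (ι (a : X).1) j = 0 := Finsupp.notMem_support_iff.mp hja
      rw [hja', zero_add]
      exact hjb'
  have key2 : u (a.1 + b.1) ⊆ (u a.1) ∪ (u b.1) := by
    intro j hj
    have hj' : j ∈ (φ (ι ((a : X).1 + (b : X).1))).support := hj
    rw [hsum] at hj'
    exact Finsupp.support_add hj'
  apply hmono (Os (u (a.1 + b.1)))
  · rw [← ha', ← hb']
    show symmDiff ((Os (u a.1)).1) ((Os (u b.1)).1) ⊆ (Os (u (a.1 + b.1))).1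
    simp only [hOs, osF_coe]
    rw [← Finset.coe_symmDiff, ← Finset.image_symmDiff _ _ hEIinj]
    exact Finset.coe_subset.mpr (Finset.image_subset_image key1)
  · rw [← ha', ← hb']
    show (Os (u (a.1 + b.1))).1 ⊆ (Os (u a.1)).1 ∪ (Os (u b.1)).1
    simp only [hOs, osF_coe]
    rw [← Finset.coe_union, ← Finset.image_union]
    exact Finset.coe_subset.mpr (Finset.image_subset_image key2)
end Stmt13
theorem stmt_13 {G : Type} [AddCommSemigroup G]
    (hcancel : ∀ a b c : G, a + c = b + c → a = b)
    (θ : Cardinal.{0}) (hθ : θ ≤ Cardinal.mk G)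
    (h : Pl (Cardinal.mk G) θ) :
    -- `G ↛ [κ]^{FS₂}_θ` where `κ = |G|`
    ∃ c : G → θ.ord.ToType,
      ∀ X : Set G, Cardinal.mk X = Cardinal.mk G →
        ∀ δ : θ.ord.ToType, ∃ x ∈ X, ∃ y ∈ X, x ≠ y ∧ c (x + y) = δ := by
  classical
  rcases eq_or_ne θ 0 with rfl | hθ0
  · exact absurd h (Stmt13.not_Pl_zero _)
  have hθ1 : 1 ≤ θ := Cardinal.one_le_iff_ne_zero.mpr hθ0
  rcases lt_or_ge θ 2 with hθlt2 | hθ2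
  · -- `θ = 1`
    have hθeq : θ = 1 := by
      have h2a : (2 : Cardinal.{0}) < ℵ₀ := by
        exact_mod_cast Cardinal.nat_lt_aleph0 2
      obtain ⟨n, rfl⟩ := Cardinal.lt_aleph0.mp (hθlt2.trans h2a)
      have h2 : n < 2 := by exact_mod_cast hθlt2
      have h1' : 1 ≤ n := by exact_mod_cast hθ1
      have hn1 : n = 1 := by omega
      rw [hn1]; norm_num
    subst hθeq
    haveI hCne : Nonempty (Cardinal.ord 1).ToType := by
      rw [Ordinal.toType_nonempty_iff_ne_zero]
      simp
    haveI hCsub : Subsingleton (Cardinal.ord 1).ToType := by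
      have h1 := Stmt13.colors_mk 1
      exact Cardinal.le_one_iff_subsingleton.mp (le_of_eq h1)
    rcases eq_or_ne (Cardinal.mk G) 1 with hκ1 | hκ1
    · rw [hκ1] at h
      exact absurd h Stmt13.not_Pl_one
    · refine ⟨fun _ => Classical.arbitrary _, ?_⟩
      intro X hX δ
      have h2 : 1 < Cardinal.mk X := by
        rw [hX]
        exact lt_of_le_of_ne hθ (Ne.symm hκ1)
      haveI : Nontrivial X := Cardinal.one_lt_iff_nontrivial.mp h2
      obtain ⟨x, y, hxy⟩ := exists_pair_ne X
      refine ⟨x.1, x.2, y.1, y.2, ?_, Subsingleton.elim _ _⟩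
      intro hc
      exact hxy (Subtype.ext hc)
  · -- `2 ≤ θ`
    rcases lt_trichotomy (Cardinal.mk G) ℵ₀ with hfin | heq | hgt
    · rcases lt_or_eq_of_le hθ with hlt | heq2
      · exact Stmt13.finite_direct hcancel hfin hθ1 hlt
      · exact absurd h (Stmt13.not_Pl_finite hfin (le_trans hθ1 hθ) heq2)
    · rw [heq] at h
      exact absurd h (Stmt13.not_Pl_aleph0 hθ2)
    · exact Stmt13.main_uncountable hcancel hgt h
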